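/- Let M and X be metric spaces with M having at least 3 points, s(M) > 0 and e(M) > 0, and let ε be a real number with 0 < ε ≤ s(M)/4 and ε < e(M)/4. Then any two correspondences R, R' between M and X with dis R < 2ε and dis R' < 2ε are equal as subsets of M × X. Consequently, if R is a correspondence with dis R < 2ε, then dis R = inf{dis S : S a correspondence between M and X}, i.e., R is an optimal correspondence realizing 2·d_GH(M,X). -/

import Mathlib

open ENNReal

/-- A correspondence between `A` and `B`: a relation whose projections are surjective. -/
def IsCorr {A B : Type*} (R : Set (A × B)) : Prop :=
  (∀ a, ∃ b, (a, b) ∈ R) ∧ ∀ b, ∃ a, (a, b) ∈ R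

/-- Distortion of a relation between metric spaces, a value in `[0,∞]`. -/
noncomputable def disMS {A B : Type*} [MetricSpace A] [MetricSpace B]
    (σ : Set (A × B)) : ℝ≥0∞ :=
  ⨆ p ∈ σ, ⨆ q ∈ σ, ENNReal.ofReal |dist p.1 q.1 - dist p.2 q.2|

/-- `s(M) = inf{dist(x,x') : x ≠ x'}`. -/
noncomputable def sSpace (M : Type*) [MetricSpace M] : ℝ :=
  sInf {r : ℝ | ∃ x y : M, x ≠ y ∧ r = dist x y}

/-- `e(M) = inf{dis f : f : M ≃ M, f ≠ id}`, a value in `[0,∞]`. -/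
noncomputable def eSpace (M : Type*) [MetricSpace M] : ℝ≥0∞ :=
  ⨅ f ∈ {f : M ≃ M | f ≠ Equiv.refl M},
    ⨆ x : M, ⨆ y : M, ENNReal.ofReal |dist (f x) (f y) - dist x y|

lemma disMS_pair {A B : Type*} [MetricSpace A] [MetricSpace B] {σ : Set (A × B)}
    {p q : A × B} (hp : p ∈ σ) (hq : q ∈ σ) :
    ENNReal.ofReal |dist p.1 q.1 - dist p.2 q.2| ≤ disMS σ :=
  le_iSup₂_of_le p hp (le_iSup₂_of_le q hq le_rfl)

lemma sSpace_le {M : Type*} [MetricSpace M] {x y : M} (h : x ≠ y) :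
    sSpace M ≤ dist x y := by
  refine csInf_le ⟨0, ?_⟩ ⟨x, y, h, rfl⟩
  rintro r ⟨a, b, -, rfl⟩
  exact dist_nonneg

lemma corr_subset {M X : Type*} [MetricSpace M] [MetricSpace X]
    (ε : ℝ) (hε0 : 0 < ε) (hε1 : ε ≤ sSpace M / 4) (hε2 : ENNReal.ofReal ε < eSpace M / 4)
    {R R' : Set (M × X)} (hR : IsCorr R) (hR' : IsCorr R')
    (hdR : disMS R < ENNReal.ofReal (2 * ε)) (hdR' : disMS R' < ENNReal.ofReal (2 * ε)) :
    R ⊆ R' := by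
  have h2ε : (0:ℝ) < 2 * ε := by linarith
  have keyR : ∀ {p q : M × X}, p ∈ R → q ∈ R →
      |dist p.1 q.1 - dist p.2 q.2| < 2 * ε := fun hp hq =>
    (ENNReal.ofReal_lt_ofReal_iff h2ε).1 (lt_of_le_of_lt (disMS_pair hp hq) hdR)
  have keyR' : ∀ {p q : M × X}, p ∈ R' → q ∈ R' →
      |dist p.1 q.1 - dist p.2 q.2| < 2 * ε := fun hp hq =>
    (ENNReal.ofReal_lt_ofReal_iff h2ε).1 (lt_of_le_of_lt (disMS_pair hp hq) hdR')
  have eqOf : ∀ {x y : M}, dist x y < 4 * ε → x = y := by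
    intro x y h
    by_contra hne
    have := sSpace_le hne
    linarith
  obtain ⟨b, hb⟩ : ∃ b : M → X, ∀ m, (m, b m) ∈ R := ⟨_, fun m => (hR.1 m).choose_spec⟩
  obtain ⟨b', hb'⟩ : ∃ b : M → X, ∀ m, (m, b m) ∈ R' := ⟨_, fun m => (hR'.1 m).choose_spec⟩
  obtain ⟨g, hg⟩ : ∃ g : X → M, ∀ x, (g x, x) ∈ R' := ⟨_, fun x => (hR'.2 x).choose_spec⟩
  obtain ⟨g', hg'⟩ : ∃ g : X → M, ∀ x, (g x, x) ∈ R := ⟨_, fun x => (hR.2 x).choose_spec⟩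
  set φ : M → M := fun m => g (b m) with hφdef
  set ψ : M → M := fun m => g' (b' m) with hψdef
  have hφ : ∀ m, (φ m, b m) ∈ R' := fun m => hg (b m)
  have hψ : ∀ m, (ψ m, b' m) ∈ R := fun m => hg' (b' m)
  have ψφ : ∀ m, ψ (φ m) = m := by
    intro m
    have h1 : |dist (φ m) (φ m) - dist (b m) (b' (φ m))| < 2 * ε :=
      keyR' (hφ m) (hb' (φ m))
    rw [dist_self] at h1
    have h1' : dist (b m) (b' (φ m)) < 2 * ε := by
      have := abs_lt.1 h1; linarith [this.2]
    have h2 : |dist m (ψ (φ m)) - dist (b m) (b' (φ m))| < 2 * ε :=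
      keyR (hb m) (hψ (φ m))
    have h2' : dist m (ψ (φ m)) < 4 * ε := by
      have := abs_lt.1 h2; linarith [this.2]
    exact (eqOf (by rwa [dist_comm] at h2')).symm ▸ rfl
  have φψ : ∀ m, φ (ψ m) = m := by
    intro m
    have h1 : |dist (ψ m) (ψ m) - dist (b' m) (b (ψ m))| < 2 * ε :=
      keyR (hψ m) (hb (ψ m))
    rw [dist_self] at h1
    have h1' : dist (b' m) (b (ψ m)) < 2 * ε := by
      have := abs_lt.1 h1; linarith [this.2]
    have h2 : |dist m (φ (ψ m)) - dist (b' m) (b (ψ m))| < 2 * ε :=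
      keyR' (hb' m) (hφ (ψ m))
    have h2' : dist m (φ (ψ m)) < 4 * ε := by
      have := abs_lt.1 h2; linarith [this.2]
    exact (eqOf (by rwa [dist_comm] at h2')).symm ▸ rfl
  set E : M ≃ M := ⟨φ, ψ, ψφ, φψ⟩ with hEdef
  have hdisφ : ∀ x y : M, |dist (φ x) (φ y) - dist x y| < 4 * ε := by
    intro x y
    have h1 : |dist (φ x) (φ y) - dist (b x) (b y)| < 2 * ε := keyR' (hφ x) (hφ y)
    have h2 : |dist x y - dist (b x) (b y)| < 2 * ε := keyR (hb x) (hb y)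
    calc |dist (φ x) (φ y) - dist x y|
        ≤ |dist (φ x) (φ y) - dist (b x) (b y)| + |dist (b x) (b y) - dist x y| :=
          abs_sub_le _ _ _
      _ < 2 * ε + 2 * ε := by rw [abs_sub_comm (dist (b x) (b y))]; exact add_lt_add h1 h2
      _ = 4 * ε := by ring
  have hErefl : E = Equiv.refl M := by
    by_contra hne
    have hle : eSpace M ≤ ⨆ x : M, ⨆ y : M, ENNReal.ofReal |dist (E x) (E y) - dist x y| :=
      iInf₂_le E hne
    have hsup : (⨆ x : M, ⨆ y : M, ENNReal.ofReal |dist (E x) (E y) - dist x y|)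
        ≤ ENNReal.ofReal (4 * ε) :=
      iSup₂_le fun x y => ENNReal.ofReal_le_ofReal (hdisφ x y).le
    have h4 : ENNReal.ofReal (4 * ε) < eSpace M := by
      have : ENNReal.ofReal (4 * ε) = 4 * ENNReal.ofReal ε := by
        rw [ENNReal.ofReal_mul (by norm_num)]
        norm_num
      rw [this]
      calc (4 : ℝ≥0∞) * ENNReal.ofReal ε < 4 * (eSpace M / 4) := by
            rw [ENNReal.mul_lt_mul_iff_right (by norm_num) (by norm_num)]
            exact hε2
        _ ≤ eSpace M := ENNReal.mul_div_le
    exact absurd (hle.trans hsup) (not_le.2 h4)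
  have hφid : ∀ m, φ m = m := fun m => by
    have : E m = Equiv.refl M m := by rw [hErefl]
    exact this
  rintro ⟨a, x⟩ hax
  have h1 : |dist a a - dist (b a) x| < 2 * ε := keyR (hb a) hax
  rw [dist_self] at h1
  have h1' : dist (b a) x < 2 * ε := by have := abs_lt.1 h1; linarith [this.2]
  have haR' : (a, b a) ∈ R' := by have := hφ a; rwa [hφid a] at this
  have h2 : |dist (g x) a - dist x (b a)| < 2 * ε := keyR' (hg x) haR'
  have h2' : dist (g x) a < 4 * ε := by
    have := abs_lt.1 h2
    rw [dist_comm x (b a)] at this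
    linarith [this.2]
  have hgeq : g x = a := eqOf h2'
  exact hgeq ▸ hg x

/-- If `M` is totally discrete and totally asymmetric, `0 < ε ≤ s(M)/4`, `ε < e(M)/4`,
then any two correspondences between `M` and `X` of distortion `< 2ε` coincide, and such a
correspondence is optimal: its distortion equals `inf{dis S} = 2 d_GH(M,X)`. -/
theorem stmt_5 {M X : Type*} [MetricSpace M] [MetricSpace X]
    (hM : ∃ x y z : M, x ≠ y ∧ x ≠ z ∧ y ≠ z)
    (hs : 0 < sSpace M) (he : 0 < eSpace M)
    (ε : ℝ) (hε0 : 0 < ε) (hε1 : ε ≤ sSpace M / 4) (hε2 : ENNReal.ofReal ε < eSpace M / 4) :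
    (∀ R R' : Set (M × X), IsCorr R → IsCorr R' →
      disMS R < ENNReal.ofReal (2 * ε) → disMS R' < ENNReal.ofReal (2 * ε) → R = R') ∧
    ∀ R : Set (M × X), IsCorr R → disMS R < ENNReal.ofReal (2 * ε) →
      disMS R = ⨅ S ∈ {S : Set (M × X) | IsCorr S}, disMS S := by
  have key : ∀ R R' : Set (M × X), IsCorr R → IsCorr R' →
      disMS R < ENNReal.ofReal (2 * ε) → disMS R' < ENNReal.ofReal (2 * ε) → R = R' :=
    fun R R' hR hR' hdR hdR' => le_antisymm
      (corr_subset ε hε0 hε1 hε2 hR hR' hdR hdR')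
      (corr_subset ε hε0 hε1 hε2 hR' hR hdR' hdR)
  refine ⟨key, fun R hR hdR => le_antisymm ?_ (iInf₂_le R hR)⟩
  refine le_iInf₂ fun S hS => ?_
  by_cases h : disMS S < ENNReal.ofReal (2 * ε)
  · rw [key R S hR hS hdR h]
  · exact le_trans hdR.le (not_lt.1 h)
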